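/- (Funk's multiplier theorem.) Let N ∈ ℕ and let p : ℝ³ → ℝ be a harmonic polynomial homogeneous of degree N. Then the Funk–Minkowski transform of the spherical harmonic p|_{S²} satisfies, for every ξ ∈ S², (F(p|_{S²}))(ξ) = P_N(0) · p(ξ). (In particular F annihilates spherical harmonics of odd degree, since P_N(0) = 0 for odd N.) -/

import Mathlib

open MeasureTheory Real Filter

noncomputable section

local notation "E3" => EuclideanSpace ℝ (Fin 3)

/-- The surface measure `σ` on the unit sphere `S² ⊆ ℝ³` (total mass `4π`). -/
def sphMeasure : Measure (Metric.sphere (0 : E3) 1) :=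
  (volume : Measure E3).toSphere

/-- Surface gradient: `∇_S g (ξ) = ∇g(ξ) - ⟪∇g(ξ), ξ⟫ ξ`. -/
def sgrad (g : E3 → ℝ) (ξ : E3) : E3 :=
  gradient g ξ - (inner ℝ (gradient g ξ) ξ : ℝ) • ξ

/-- The Funk–Minkowski integral of `f` over the great circle spanned by the
orthonormal pair `e₁, e₂`. -/
def funkAt (f : E3 → ℝ) (e₁ e₂ : E3) : ℝ :=
  (1 / (2 * π)) * ∫ ω in (0:ℝ)..(2 * π), f (Real.cos ω • e₁ + Real.sin ω • e₂)

/-- Vector-valued (componentwise) Funk–Minkowski integral. -/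
def funkVecAt (f : E3 → E3) (e₁ e₂ : E3) : E3 :=
  (1 / (2 * π)) • ∫ ω in (0:ℝ)..(2 * π), f (Real.cos ω • e₁ + Real.sin ω • e₂)

/-- `(e₁, e₂)` is an orthonormal pair orthogonal to `ξ`. -/
def IsFrame (ξ e₁ e₂ : E3) : Prop :=
  ‖e₁‖ = 1 ∧ ‖e₂‖ = 1 ∧ (inner ℝ e₁ e₂ : ℝ) = 0 ∧
    (inner ℝ e₁ ξ : ℝ) = 0 ∧ (inner ℝ e₂ ξ : ℝ) = 0

/-- `g` agrees on `S²` with the Funk–Minkowski transform `F f`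
(for every admissible choice of frame). -/
def IsFunk (f g : E3 → ℝ) : Prop :=
  ∀ ξ ∈ Metric.sphere (0 : E3) 1, ∀ e₁ e₂ : E3, IsFrame ξ e₁ e₂ →
    g ξ = funkAt f e₁ e₂

/-- `g` agrees on `S²` with the componentwise Funk–Minkowski transform `F f`. -/
def IsFunkVec (f g : E3 → E3) : Prop :=
  ∀ ξ ∈ Metric.sphere (0 : E3) 1, ∀ e₁ e₂ : E3, IsFrame ξ e₁ e₂ →
    g ξ = funkVecAt f e₁ e₂

/-- `g` agrees on `S²` with the componentwise spherical Hilbert-type convolution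
`S f`, defined as a principal-value limit. -/
def IsSphVec (f g : E3 → E3) : Prop :=
  ∀ θ ∈ Metric.sphere (0 : E3) 1,
    Tendsto (fun ε : ℝ => (1 / (4 * π)) •
        ∫ η in {η : Metric.sphere (0 : E3) 1 | ε < |(inner ℝ θ (η : E3) : ℝ)|},
          (inner ℝ θ (η : E3) : ℝ)⁻¹ • f (η : E3) ∂sphMeasure)
      (nhdsWithin 0 (Set.Ioi 0)) (nhds (g θ))

/-- Cross product on `ℝ³`. -/
def cross (a b : E3) : E3 :=
  (WithLp.equiv 2 (Fin 3 → ℝ)).symm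
    ![a 1 * b 2 - a 2 * b 1, a 2 * b 0 - a 0 * b 2, a 0 * b 1 - a 1 * b 0]

/-- Legendre polynomial of degree `N`, via Rodrigues' formula. -/
def legendreP (N : ℕ) (t : ℝ) : ℝ :=
  (1 / (2 ^ N * (N.factorial : ℝ))) * iteratedDeriv N (fun s : ℝ => (s ^ 2 - 1) ^ N) t

/-- Evaluation of a polynomial in three variables as a function on `ℝ³`. -/
def evalP (P : MvPolynomial (Fin 3) ℝ) (x : E3) : ℝ :=
  MvPolynomial.eval (fun i => x i) P

/-- `P` is harmonic: its three unmixed second partial derivatives sum to zero. -/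
def IsHarmonic (P : MvPolynomial (Fin 3) ℝ) : Prop :=
  MvPolynomial.pderiv 0 (MvPolynomial.pderiv 0 P) +
    MvPolynomial.pderiv 1 (MvPolynomial.pderiv 1 P) +
    MvPolynomial.pderiv 2 (MvPolynomial.pderiv 2 P) = 0


namespace Stmt11Aux
open MvPolynomial


lemma coeff_pderiv {n : ℕ} (i : Fin n) (f : MvPolynomial (Fin n) ℝ) (d : Fin n →₀ ℕ) :
    coeff d (pderiv i f) = ((d i : ℝ) + 1) * coeff (d + Finsupp.single i 1) f := by
  induction f using MvPolynomial.induction_on' with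
  | add p q hp hq => simp [hp, hq, mul_add]
  | monomial u a =>
    rw [pderiv_monomial]
    rw [coeff_monomial, coeff_monomial]
    by_cases h : u = d + Finsupp.single i 1
    · have h1 : u - Finsupp.single i 1 = d := by
        rw [h]; exact add_tsub_cancel_right _ _
      have h2 : u i = d i + 1 := by
        rw [h]; simp
      simp [h1, h, h2]; ring
    · rw [if_neg h]
      by_cases hu : u i = 0
      · by_cases h1 : u - Finsupp.single i 1 = d <;> simp [h1, hu]
      · have h1 : u - Finsupp.single i 1 ≠ d := by
          intro hd
          apply h
          rw [← hd, tsub_add_cancel_of_le]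
          rwa [Finsupp.single_le_iff, Nat.one_le_iff_ne_zero]
        simp [h1]

lemma pderiv_comm {n : ℕ} (i j : Fin n) (f : MvPolynomial (Fin n) ℝ) :
    pderiv i (pderiv j f) = pderiv j (pderiv i f) := by
  apply MvPolynomial.ext
  intro d
  rw [coeff_pderiv, coeff_pderiv, coeff_pderiv, coeff_pderiv]
  have hadd : d + Finsupp.single i 1 + Finsupp.single j 1
      = d + Finsupp.single j 1 + Finsupp.single i 1 := by
    rw [add_assoc, add_assoc, add_comm (Finsupp.single i 1)]
  rw [hadd]
  by_cases h : i = j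
  · subst h; ring
  · simp only [Finsupp.add_apply, Finsupp.single_apply, if_neg h, if_neg (Ne.symm h),
      add_zero]
    ring



lemma sum_eq_of_homog {k : ℕ} {S : MvPolynomial (Fin k) ℝ} {d : ℕ}
    (hS : S.IsHomogeneous d) {u : Fin k →₀ ℕ} (hu : coeff u S ≠ 0) :
    ∑ i : Fin k, u i = d := by
  have h := hS hu
  change (Finsupp.weight (fun _ => 1)) u = d at h
  rw [← Finsupp.degree_eq_weight_one] at h
  rw [← h, Finsupp.degree]
  exact (Finset.sum_subset (Finset.subset_univ _)
    (fun i _ hi => Finsupp.notMem_support_iff.mp hi)).symm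

lemma euler {k : ℕ} {S : MvPolynomial (Fin k) ℝ} {d : ℕ} (hS : S.IsHomogeneous d) :
    ∑ i : Fin k, X i * pderiv i S = C (d : ℝ) * S := by
  apply MvPolynomial.ext
  intro u
  rw [MvPolynomial.coeff_sum, MvPolynomial.coeff_C_mul]
  have hterm : ∀ i : Fin k, coeff u (X i * pderiv i S) = (u i : ℝ) * coeff u S := by
    intro i
    rw [coeff_X_mul']
    by_cases h : i ∈ u.support
    · rw [if_pos h]
      rw [coeff_pderiv]
      have h2 : (u - Finsupp.single i 1) + Finsupp.single i 1 = u := by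
        rw [tsub_add_cancel_of_le]
        rw [Finsupp.single_le_iff, Nat.one_le_iff_ne_zero]
        exact Finsupp.mem_support_iff.mp h
      rw [h2]
      have h3 : ((u - Finsupp.single i 1 : Fin k →₀ ℕ)) i = u i - 1 := by
        simp [Finsupp.tsub_apply]
      rw [h3]
      have h4 : 1 ≤ u i := Nat.one_le_iff_ne_zero.mpr (Finsupp.mem_support_iff.mp h)
      have : ((u i - 1 : ℕ) : ℝ) = (u i : ℝ) - 1 := by
        push_cast [h4]; ring
      rw [this]; ring
    · rw [if_neg h]
      rw [Finsupp.notMem_support_iff.mp h]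
      simp
  rw [Finset.sum_congr rfl (fun i _ => hterm i), ← Finset.sum_mul]
  by_cases hu : coeff u S = 0
  · simp [hu]
  · rw [show (∑ i : Fin k, (u i : ℝ)) = ((d : ℕ) : ℝ) by
      rw [← sum_eq_of_homog hS hu]; push_cast; ring]

lemma pderiv_bind₁ {k l : ℕ} (g : Fin k → MvPolynomial (Fin l) ℝ) (j : Fin l)
    (p : MvPolynomial (Fin k) ℝ) :
    pderiv j (bind₁ g p) = ∑ i : Fin k, pderiv j (g i) * bind₁ g (pderiv i p) := by
  induction p using MvPolynomial.induction_on with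
  | C a => simp
  | add p q hp hq =>
    simp only [map_add, hp, hq, mul_add, ← Finset.sum_add_distrib]
  | mul_X p i hp =>
    rw [map_mul, bind₁_X_right, pderiv_mul, hp]
    have hd : ∀ i' : Fin k, pderiv i' (p * X i)
        = pderiv i' p * X i + (if i' = i then p else 0) := by
      intro i'
      rw [pderiv_mul]
      by_cases h : i' = i
      · subst h; rw [pderiv_X_self]; simp
      · rw [pderiv_X_of_ne (Ne.symm h)]; simp [h]
    simp only [hd, map_add, map_mul, mul_add, bind₁_X_right]
    rw [Finset.sum_add_distrib]
    congr 1
    · rw [Finset.sum_mul]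
      exact Finset.sum_congr rfl (fun i' _ => by ring)
    · rw [Finset.sum_eq_single i]
      · simp [mul_comm]
      · intro b _ hb; simp [hb]
      · intro h; exact absurd (Finset.mem_univ i) h

lemma eval_smul_homog {k : ℕ} {S : MvPolynomial (Fin k) ℝ} {d : ℕ}
    (hS : S.IsHomogeneous d) (r : ℝ) (x : Fin k → ℝ) :
    eval (fun i => r * x i) S = r ^ d * eval x S := by
  rw [eval_eq', eval_eq', Finset.mul_sum]
  apply Finset.sum_congr rfl
  intro u hu
  have hcu : coeff u S ≠ 0 := Finsupp.mem_support_iff.mp hu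
  simp only [mul_pow]
  rw [Finset.prod_mul_distrib, Finset.prod_pow_eq_pow_sum]
  rw [sum_eq_of_homog hS hcu]
  ring



lemma euler_pderiv {k : ℕ} {S : MvPolynomial (Fin k) ℝ} {d : ℕ}
    (hS : S.IsHomogeneous d) (j : Fin k) :
    ∑ i : Fin k, X i * pderiv i (pderiv j S) = C ((d : ℝ) - 1) * pderiv j S := by
  have E := congrArg (pderiv j) (euler hS)
  simp only [map_sum, pderiv_C_mul] at E
  have hterm : ∀ i : Fin k, pderiv j (X i * pderiv i S)
      = (if i = j then pderiv j S else 0) + X i * pderiv i (pderiv j S) := by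
    intro i
    rw [pderiv_mul]
    by_cases h : i = j
    · subst h; rw [pderiv_X_self, pderiv_comm]; simp
    · rw [pderiv_X_of_ne h, pderiv_comm]; simp [h]
  rw [Finset.sum_congr rfl (fun i _ => hterm i), Finset.sum_add_distrib,
    Finset.sum_ite_eq' Finset.univ j (fun _ => pderiv j S)] at E
  simp only [Finset.mem_univ, if_true] at E
  have h2 := sub_eq_of_eq_add' E.symm
  rw [← h2, map_sub, map_one, sub_mul, one_mul]

lemma cont_evalCircle (S : MvPolynomial (Fin 2) ℝ) :
    Continuous fun ω : ℝ => eval ![Real.cos ω, Real.sin ω] S := by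
  have hv : Continuous fun ω : ℝ => (![Real.cos ω, Real.sin ω] : Fin 2 → ℝ) := by
    apply continuous_pi; intro i
    fin_cases i
    · simpa using Real.continuous_cos
    · simpa using Real.continuous_sin
  exact (MvPolynomial.continuous_eval (p := S)).comp hv

lemma hasDerivAt_evalCircle (S : MvPolynomial (Fin 2) ℝ) (ω : ℝ) :
    HasDerivAt (fun ω => eval ![Real.cos ω, Real.sin ω] S)
      (eval ![Real.cos ω, Real.sin ω] (pderiv 1 S) * Real.cos ω
        - eval ![Real.cos ω, Real.sin ω] (pderiv 0 S) * Real.sin ω) ω := by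
  induction S using MvPolynomial.induction_on with
  | C a =>
    simp only [pderiv_C, eval_C, map_zero, zero_mul, sub_zero, mul_zero, zero_sub, neg_zero]
    exact hasDerivAt_const ω a
  | add p q hp hq =>
    have hfun : (fun ω => eval ![Real.cos ω, Real.sin ω] (p + q))
        = fun ω => eval ![Real.cos ω, Real.sin ω] p + eval ![Real.cos ω, Real.sin ω] q := by
      funext ω; rw [map_add]
    rw [hfun]
    have h := hp.add hq
    refine HasDerivAt.congr_deriv h ?_
    rw [map_add, map_add, map_add, map_add]
    ring
  | mul_X p i hp =>
    obtain rfl | rfl : i = 0 ∨ i = 1 := by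
      rcases i with ⟨_ | _ | _, hi⟩
      · exact Or.inl rfl
      · exact Or.inr rfl
      · exact absurd hi (by omega)
    · have hfun : (fun ω => eval ![Real.cos ω, Real.sin ω] (p * X 0))
          = fun ω => (eval ![Real.cos ω, Real.sin ω] p) * Real.cos ω := by
        funext ω; simp
      rw [hfun]
      have h := hp.mul (Real.hasDerivAt_cos ω)
      refine HasDerivAt.congr_deriv h ?_
      simp only [pderiv_mul, pderiv_X_self, pderiv_X_of_ne (show (0:Fin 2) ≠ 1 by decide),
        map_add, map_mul, map_zero, eval_X, mul_zero, mul_one, add_zero, zero_add]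
      simp only [Matrix.cons_val_zero, Matrix.cons_val_one, Matrix.head_cons]
      ring
    · have hfun : (fun ω => eval ![Real.cos ω, Real.sin ω] (p * X 1))
          = fun ω => (eval ![Real.cos ω, Real.sin ω] p) * Real.sin ω := by
        funext ω; simp
      rw [hfun]
      have h := hp.mul (Real.hasDerivAt_sin ω)
      refine HasDerivAt.congr_deriv h ?_
      simp only [pderiv_mul, pderiv_X_self, pderiv_X_of_ne (show (1:Fin 2) ≠ 0 by decide),
        map_add, map_mul, map_zero, eval_X, mul_zero, mul_one, add_zero, zero_add]
      simp only [Matrix.cons_val_zero, Matrix.cons_val_one, Matrix.head_cons]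
      ring



lemma integral_lap (S : MvPolynomial (Fin 2) ℝ) {d : ℕ} (hS : S.IsHomogeneous d) :
    (∫ ω in (0:ℝ)..(2*π),
      eval ![Real.cos ω, Real.sin ω] (pderiv 0 (pderiv 0 S) + pderiv 1 (pderiv 1 S)))
    = (d:ℝ)^2 * ∫ ω in (0:ℝ)..(2*π), eval ![Real.cos ω, Real.sin ω] S := by
  set G₁ : ℝ → ℝ := fun ω => eval ![Real.cos ω, Real.sin ω] (pderiv 1 S) * Real.cos ω
      - eval ![Real.cos ω, Real.sin ω] (pderiv 0 S) * Real.sin ω with hG₁def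
  have hG1 : ∀ ω : ℝ, HasDerivAt G₁
      (eval ![Real.cos ω, Real.sin ω] (pderiv 0 (pderiv 0 S) + pderiv 1 (pderiv 1 S))
        - (d:ℝ)^2 * eval ![Real.cos ω, Real.sin ω] S) ω := by
    intro ω
    have h1 := (hasDerivAt_evalCircle (pderiv 1 S) ω).mul (Real.hasDerivAt_cos ω)
    have h0 := (hasDerivAt_evalCircle (pderiv 0 S) ω).mul (Real.hasDerivAt_sin ω)
    have h := h1.sub h0
    refine HasDerivAt.congr_deriv h ?_
    symm
    -- abbreviations
    set c := Real.cos ω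
    set s := Real.sin ω
    set v := ![Real.cos ω, Real.sin ω]
    have hv0 : v 0 = c := rfl
    have hv1 : v 1 = s := rfl
    have hE : eval v (pderiv 0 S) * c + eval v (pderiv 1 S) * s = (d:ℝ) * eval v S := by
      have := congrArg (eval v) (euler hS)
      simp only [map_sum, map_add, map_mul, eval_C, eval_X, Fin.sum_univ_two, hv0, hv1] at this
      linarith [this]
    have hE0 : eval v (pderiv 0 (pderiv 0 S)) * c + eval v (pderiv 1 (pderiv 0 S)) * s
        = ((d:ℝ) - 1) * eval v (pderiv 0 S) := by
      have := congrArg (eval v) (euler_pderiv hS 0)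
      simp only [map_sum, map_add, map_mul, eval_C, eval_X, Fin.sum_univ_two, hv0, hv1] at this
      linarith [this]
    have hE1 : eval v (pderiv 1 (pderiv 0 S)) * c + eval v (pderiv 1 (pderiv 1 S)) * s
        = ((d:ℝ) - 1) * eval v (pderiv 1 S) := by
      have := congrArg (eval v) (euler_pderiv hS 1)
      simp only [map_sum, map_add, map_mul, eval_C, eval_X, Fin.sum_univ_two, hv0, hv1] at this
      rw [pderiv_comm 0 1 S] at this
      linarith [this]
    have hcs : s^2 + c^2 = 1 := Real.sin_sq_add_cos_sq ω
    rw [map_add]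
    rw [pderiv_comm 0 1]
    linear_combination c * hE0 + s * hE1 + (d:ℝ) * hE
      - (eval v (pderiv 0 (pderiv 0 S)) + eval v (pderiv 1 (pderiv 1 S))) * hcs
  have hcontLap := cont_evalCircle (pderiv 0 (pderiv 0 S) + pderiv 1 (pderiv 1 S))
  have hcontS := cont_evalCircle S
  have hcontG2 : Continuous (fun ω => eval ![Real.cos ω, Real.sin ω]
      (pderiv 0 (pderiv 0 S) + pderiv 1 (pderiv 1 S))
        - (d:ℝ)^2 * eval ![Real.cos ω, Real.sin ω] S) :=
    hcontLap.sub (continuous_const.mul hcontS)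
  have hFTC := intervalIntegral.integral_eq_sub_of_hasDerivAt
    (f := G₁) (a := (0:ℝ)) (b := 2*π) (fun ω _ => hG1 ω)
    (hcontG2.intervalIntegrable 0 (2*π))
  have hend : G₁ (2*π) = G₁ 0 := by
    simp [hG₁def, Real.cos_two_pi, Real.sin_two_pi, Real.cos_zero, Real.sin_zero]
  rw [hend, sub_self] at hFTC
  rw [intervalIntegral.integral_sub (hcontLap.intervalIntegrable 0 (2*π))
    (Continuous.intervalIntegrable (u := fun ω => (d:ℝ)^2 * eval ![Real.cos ω, Real.sin ω] S) (continuous_const.mul hcontS) 0 (2*π)),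
    intervalIntegral.integral_const_mul] at hFTC
  linarith [hFTC]

lemma integral_odd (S : MvPolynomial (Fin 2) ℝ) {d : ℕ} (hS : S.IsHomogeneous d)
    (hd : Odd d) :
    (∫ ω in (0:ℝ)..(2*π), eval ![Real.cos ω, Real.sin ω] S) = 0 := by
  have hneg : ∀ ω : ℝ, eval ![Real.cos (ω + π), Real.sin (ω + π)] S
      = - eval ![Real.cos ω, Real.sin ω] S := by
    intro ω
    have h := eval_smul_homog hS (-1) ![Real.cos ω, Real.sin ω]
    rw [Odd.neg_one_pow hd] at h
    have hv : (![Real.cos (ω + π), Real.sin (ω + π)] : Fin 2 → ℝ)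
        = fun i => (-1) * (![Real.cos ω, Real.sin ω] i) := by
      funext i
      obtain rfl | rfl : i = 0 ∨ i = 1 := by
        rcases i with ⟨_ | _ | _, hi⟩
        · exact Or.inl rfl
        · exact Or.inr rfl
        · exact absurd hi (by omega)
      · simp [Real.cos_add_pi]
      · simp [Real.sin_add_pi]
    rw [hv, h]
    ring
  have hint : ∀ a b : ℝ, IntervalIntegrable
      (fun ω => eval ![Real.cos ω, Real.sin ω] S) MeasureTheory.volume a b :=
    fun a b => (cont_evalCircle S).intervalIntegrable a b
  have hsplit : (∫ ω in (0:ℝ)..π, eval ![Real.cos ω, Real.sin ω] S)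
      + (∫ ω in π..(2*π), eval ![Real.cos ω, Real.sin ω] S)
      = ∫ ω in (0:ℝ)..(2*π), eval ![Real.cos ω, Real.sin ω] S :=
    intervalIntegral.integral_add_adjacent_intervals (hint 0 π) (hint π (2*π))
  have hshift : (∫ ω in π..(2*π), eval ![Real.cos ω, Real.sin ω] S)
      = ∫ ω in (0:ℝ)..π, eval ![Real.cos (ω + π), Real.sin (ω + π)] S := by
    rw [intervalIntegral.integral_comp_add_right
      (fun ω => eval ![Real.cos ω, Real.sin ω] S) π]
    norm_num [two_mul]
  have : (∫ ω in (0:ℝ)..π, eval ![Real.cos (ω + π), Real.sin (ω + π)] S)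
      = - ∫ ω in (0:ℝ)..π, eval ![Real.cos ω, Real.sin ω] S := by
    rw [← intervalIntegral.integral_neg]
    apply intervalIntegral.integral_congr
    intro ω _
    exact hneg ω
  rw [hshift, this] at hsplit
  linarith [hsplit]



lemma cons_add_single_zero (m k : ℕ) (u : Fin 2 →₀ ℕ) :
    Finsupp.cons m u + Finsupp.single (0 : Fin 3) k = Finsupp.cons (m + k) u := by
  ext j
  refine Fin.cases ?_ (fun j => ?_) j
  · simp [Finsupp.cons_zero]
  · simp [Finsupp.cons_succ, Finsupp.single_apply, (Fin.succ_ne_zero j).symm]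

lemma cons_add_single_succ (m k : ℕ) (i : Fin 2) (u : Fin 2 →₀ ℕ) :
    Finsupp.cons m u + Finsupp.single i.succ k = Finsupp.cons m (u + Finsupp.single i k) := by
  ext j
  refine Fin.cases ?_ (fun j => ?_) j
  · simp [Finsupp.cons_zero, Finsupp.single_apply, Fin.succ_ne_zero i]
  · simp [Finsupp.cons_succ, Finsupp.single_apply, Fin.succ_inj]

lemma coeff_recurrence {Q : MvPolynomial (Fin 3) ℝ}
    (hQ : pderiv 0 (pderiv 0 Q) + pderiv 1 (pderiv 1 Q) + pderiv 2 (pderiv 2 Q) = 0)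
    (m : ℕ) :
    pderiv 0 (pderiv 0 ((finSuccEquiv ℝ 2 Q).coeff m))
      + pderiv 1 (pderiv 1 ((finSuccEquiv ℝ 2 Q).coeff m))
    = C (-(((m : ℝ) + 1) * ((m : ℝ) + 2))) * (finSuccEquiv ℝ 2 Q).coeff (m + 2) := by
  apply MvPolynomial.ext
  intro u
  have h1 : (1 : Fin 3) = Fin.succ 0 := rfl
  have h2 : (2 : Fin 3) = Fin.succ 1 := rfl
  have e1 : Finsupp.cons m u + Finsupp.single (0 : Fin 3) 1 + Finsupp.single (0 : Fin 3) 1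
      = Finsupp.cons (m + 2) u := by
    rw [cons_add_single_zero, cons_add_single_zero]
  have e2 : ∀ i : Fin 2, Finsupp.cons m u + Finsupp.single i.succ 1 + Finsupp.single i.succ 1
      = Finsupp.cons m (u + Finsupp.single i 1 + Finsupp.single i 1) := by
    intro i
    rw [cons_add_single_succ, cons_add_single_succ]
  have hw := congrArg (coeff (Finsupp.cons m u)) hQ
  simp only [coeff_add, coeff_zero, coeff_pderiv] at hw
  rw [h1, h2] at hw
  simp only [e1, e2, cons_add_single_zero, cons_add_single_succ, Finsupp.cons_zero,
    Finsupp.cons_succ, Finsupp.add_apply, Finsupp.single_apply] at hw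
  rw [coeff_add, coeff_C_mul, coeff_pderiv, coeff_pderiv, coeff_pderiv, coeff_pderiv,
    finSuccEquiv_coeff_coeff, finSuccEquiv_coeff_coeff, finSuccEquiv_coeff_coeff]
  simp only [Finsupp.add_apply, Finsupp.single_apply]
  norm_num at hw ⊢
  push_cast at hw ⊢
  linarith [hw]

end Stmt11Aux

namespace Stmt11Aux
section Leg
open Polynomial


lemma iteratedDeriv_polyeval (p : Polynomial ℝ) (n : ℕ) :
    iteratedDeriv n (fun s => p.eval s) = fun s => (derivative^[n] p).eval s := by
  induction n with
  | zero => simp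
  | succ n ih =>
    rw [iteratedDeriv_succ, ih]
    funext s
    rw [Function.iterate_succ_apply']
    exact Polynomial.deriv _

lemma coeff_pow_self (N : ℕ) :
    ((X ^ 2 - 1 : Polynomial ℝ) ^ N).coeff N
      = if N % 2 = 0 then (-1 : ℝ) ^ (N / 2) * (N.choose (N / 2)) else 0 := by
  have hrw : (X ^ 2 - 1 : Polynomial ℝ) = X ^ 2 + (-1) := by ring
  rw [hrw, add_pow]
  rw [Polynomial.finset_sum_coeff]
  have hterm : ∀ k ∈ Finset.range (N + 1),
      ((X ^ 2 : Polynomial ℝ) ^ k * (-1) ^ (N - k) * (N.choose k : Polynomial ℝ)).coeff N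
      = if N = 2 * k then ((-1 : ℝ) ^ (N - k) * (N.choose k)) else 0 := by
    intro k _
    have h1 : ((X ^ 2 : Polynomial ℝ) ^ k * (-1) ^ (N - k) * (N.choose k : Polynomial ℝ))
        = C ((-1 : ℝ) ^ (N - k) * (N.choose k : ℝ)) * X ^ (2 * k) := by
      rw [← pow_mul]
      push_cast
      ring_nf
      simp [map_mul, map_pow, map_natCast, C_eq_natCast]
      ring
    rw [h1, Polynomial.coeff_C_mul, Polynomial.coeff_X_pow]
    by_cases h : N = 2 * k <;> simp [h]
  rw [Finset.sum_congr rfl hterm]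
  by_cases hN : N % 2 = 0
  · obtain ⟨K, hK⟩ := Nat.even_iff.mpr hN
    have hKK : N = 2 * K := by omega
    rw [Finset.sum_eq_single K]
    · rw [if_pos hKK]
      have : N - K = K := by omega
      rw [this, if_pos hN]
      have : N / 2 = K := by omega
      rw [this]
    · intro b _ hb
      rw [if_neg (by omega)]
    · intro h
      exact absurd (Finset.mem_range.mpr (by omega)) h
  · rw [if_neg hN]
    apply Finset.sum_eq_zero
    intro k _
    rw [if_neg (by omega)]

lemma legendreP_zero (N : ℕ) :
    legendreP N 0 = if N % 2 = 0 then
      (-1 : ℝ) ^ (N / 2) * (N.choose (N / 2)) / 2 ^ N else 0 := by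
  have hfun : (fun s : ℝ => (s ^ 2 - 1) ^ N)
      = fun s => ((X ^ 2 - 1 : Polynomial ℝ) ^ N).eval s := by
    funext s; simp
  rw [legendreP, hfun, iteratedDeriv_polyeval]
  show 1 / (2 ^ N * (N.factorial : ℝ)) * ((derivative^[N] ((X ^ 2 - 1) ^ N)).eval 0) = _
  rw [← Polynomial.coeff_zero_eq_eval_zero, Polynomial.coeff_iterate_derivative]
  rw [zero_add, Nat.descFactorial_self, coeff_pow_self]
  have hfac : (N.factorial : ℝ) ≠ 0 := Nat.cast_ne_zero.mpr (Nat.factorial_ne_zero N)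
  have h2 : (2 : ℝ) ^ N ≠ 0 := pow_ne_zero _ two_ne_zero
  by_cases hN : N % 2 = 0 <;> simp only [hN, if_true, if_false, if_pos, if_neg]
  · rw [nsmul_eq_mul]
    field_simp
  · simp [hN]

end Leg
end Stmt11Aux

open Stmt11Aux MvPolynomial in
/-- **Funk's multiplier theorem.** For `p` a harmonic polynomial
homogeneous of degree `N`: `F(p|_{S²})(ξ) = P_N(0) p(ξ)`. -/
theorem stmt11 (N : ℕ)
    (P : MvPolynomial (Fin 3) ℝ) (hP : IsHarmonic P) (hhom : P.IsHomogeneous N)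
    (ξ : E3) (hξ : ξ ∈ Metric.sphere (0 : E3) 1)
    (e₁ e₂ : E3) (hframe : IsFrame ξ e₁ e₂) :
    funkAt (evalP P) e₁ e₂ = legendreP N 0 * evalP P ξ := by
  classical
  obtain ⟨hn1, hn2, h12, h1x, h2x⟩ := hframe
  have hxnorm : ‖ξ‖ = 1 := by simpa using mem_sphere_zero_iff_norm.mp hξ
  set v : Fin 3 → E3 := ![ξ, e₁, e₂] with hv
  have hinner : ∀ x y : E3, (inner ℝ x y : ℝ) = ∑ i : Fin 3, x i * y i := by
    intro x y
    rw [PiLp.inner_apply]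
    simp [RCLike.inner_apply, conj_trivial, mul_comm]
  have hs : ∀ x : E3, ‖x‖ = 1 → (∑ i : Fin 3, x i * x i) = 1 := by
    intro x hx
    have h := real_inner_self_eq_norm_sq x
    rw [hinner, hx] at h
    rw [h]; norm_num
  have ho : ∀ x y : E3, (inner ℝ x y : ℝ) = 0 → (∑ i : Fin 3, x i * y i) = 0 := by
    intro x y hxy; rw [← hinner]; exact hxy
  have horthrow : ∀ j j' : Fin 3, (∑ i : Fin 3, v j i * v j' i)
      = if j = j' then 1 else 0 := by
    intro j j'
    fin_cases j <;> fin_cases j' <;>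
      simp only [hv, Matrix.cons_val_zero, Matrix.cons_val_one, Matrix.head_cons,
        Matrix.cons_val_two, Matrix.tail_cons, Fin.mk_zero, Fin.mk_one] <;>
      norm_num <;>
      first
        | exact hs _ hxnorm
        | exact hs _ hn1
        | exact hs _ hn2
        | exact ho _ _ h12
        | exact ho _ _ h1x
        | exact ho _ _ h2x
        | exact ho _ _ (by rw [real_inner_comm]; assumption)
  set M : Matrix (Fin 3) (Fin 3) ℝ := Matrix.of (fun j i => v j i) with hM
  have hMMT : M * M.transpose = 1 := by
    ext j j'
    rw [Matrix.mul_apply]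
    have := horthrow j j'
    simpa [hM, Matrix.one_apply] using this
  have hMTM : M.transpose * M = 1 := mul_eq_one_comm.mp hMMT
  have horth : ∀ i i' : Fin 3, (∑ j : Fin 3, v j i * v j i') = if i = i' then 1 else 0 := by
    intro i i'
    have h := congrFun (congrFun hMTM i) i'
    rw [Matrix.mul_apply] at h
    simpa [hM, Matrix.one_apply] using h
  set L : Fin 3 → MvPolynomial (Fin 3) ℝ :=
    fun i => ∑ j : Fin 3, C (v j i) * X j with hL
  have hLpd : ∀ i j : Fin 3, pderiv j (L i) = C (v j i) := by
    intro i j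
    rw [hL, map_sum]
    rw [Finset.sum_eq_single j]
    · rw [pderiv_C_mul, pderiv_X_self, mul_one]
    · intro b _ hb
      rw [pderiv_C_mul, pderiv_X_of_ne hb, mul_zero]
    · intro h; exact absurd (Finset.mem_univ j) h
  have hLhom : ∀ i, (L i).IsHomogeneous 1 := by
    intro i
    apply IsHomogeneous.sum
    intro j _
    exact (isHomogeneous_X ℝ j).C_mul (v j i)
  set Q : MvPolynomial (Fin 3) ℝ := bind₁ L P with hQ
  have hQhom : Q.IsHomogeneous N := by
    have h := hhom.aeval L hLhom
    simpa [one_mul] using h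
  have hQeval : ∀ x : Fin 3 → ℝ,
      eval x Q = evalP P (x 0 • ξ + x 1 • e₁ + x 2 • e₂) := by
    intro x
    rw [hQ]
    have haeval : ∀ {k : ℕ} (y : Fin k → ℝ) (q : MvPolynomial (Fin k) ℝ),
        aeval y q = eval y q := by
      intro k y q
      rw [aeval_def, show algebraMap ℝ ℝ = RingHom.id ℝ from rfl]
      exact eval₂_id q
    have hb : eval x (bind₁ L P) = eval (fun i => eval x (L i)) P := by
      have h := aeval_bind₁ (S := ℝ) x L P
      rw [haeval, haeval] at h
      rw [h]
      rfl
    rw [hb, evalP]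
    have hfg : (fun i => eval x (L i))
        = fun i => (x 0 • ξ + x 1 • e₁ + x 2 • e₂) i := by
      funext i
      rw [hL]
      simp only [map_sum, map_mul, eval_C, eval_X]
      have hco : (x 0 • ξ + x 1 • e₁ + x 2 • e₂) i
          = x 0 * ξ i + x 1 * e₁ i + x 2 * e₂ i := by
        simp [PiLp.add_apply, PiLp.smul_apply, smul_eq_mul]
      rw [hco, Fin.sum_univ_three]
      simp [hv]
      ring
    rw [hfg]
  have hQharm : pderiv 0 (pderiv 0 Q) + pderiv 1 (pderiv 1 Q) + pderiv 2 (pderiv 2 Q) = 0 := by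
    have hd2 : ∀ j : Fin 3, pderiv j (pderiv j Q)
        = ∑ i : Fin 3, ∑ i' : Fin 3, C (v j i * v j i')
            * bind₁ L (pderiv i' (pderiv i P)) := by
      intro j
      rw [hQ, pderiv_bind₁ L j P]
      rw [map_sum]
      apply Finset.sum_congr rfl
      intro i _
      rw [hLpd, pderiv_C_mul, pderiv_bind₁, Finset.mul_sum]
      apply Finset.sum_congr rfl
      intro i' _
      rw [hLpd, ← mul_assoc, ← C_mul]
    have hsum : (∑ j : Fin 3, pderiv j (pderiv j Q)) = 0 := by
      rw [Finset.sum_congr rfl (fun j _ => hd2 j)]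
      rw [Finset.sum_comm]
      have hin : ∀ i : Fin 3, (∑ j : Fin 3, ∑ i' : Fin 3,
          C (v j i * v j i') * bind₁ L (pderiv i' (pderiv i P)))
          = bind₁ L (pderiv i (pderiv i P)) := by
        intro i
        rw [Finset.sum_comm]
        have hterm : ∀ i' : Fin 3, (∑ j : Fin 3, C (v j i * v j i')
            * bind₁ L (pderiv i' (pderiv i P)))
            = (if i = i' then (1 : MvPolynomial (Fin 3) ℝ) else 0)
              * bind₁ L (pderiv i' (pderiv i P)) := by
          intro i'
          rw [← Finset.sum_mul, ← map_sum C, horth i i']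
          congr 1
          split_ifs <;> simp
        rw [Finset.sum_congr rfl (fun i' _ => hterm i')]
        simp only [ite_mul, one_mul, zero_mul]
        rw [Finset.sum_ite_eq Finset.univ i
          (fun i' => bind₁ L (pderiv i' (pderiv i P)))]
        simp
      rw [Finset.sum_congr rfl (fun i _ => hin i), ← map_sum]
      rw [Fin.sum_univ_three]
      rw [hP]
      exact map_zero _
    rw [← Fin.sum_univ_three (fun j => pderiv j (pderiv j Q))] at *
    exact hsum
  -- coefficients
  set c : ℕ → MvPolynomial (Fin 2) ℝ := fun m => (finSuccEquiv ℝ 2 Q).coeff m with hc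
  have hchom : ∀ m, m ≤ N → (c m).IsHomogeneous (N - m) := by
    intro m hm
    exact hQhom.finSuccEquiv_coeff_isHomogeneous m (N - m) (by omega)
  have hQ'deg : (finSuccEquiv ℝ 2 Q).natDegree ≤ N := by
    by_cases hQ0 : Q = 0
    · rw [hQ0]; simp
    · rw [natDegree_finSuccEquiv]
      exact le_trans (degreeOf_le_totalDegree Q 0) (le_of_eq (hQhom.totalDegree hQ0))
  have hczero : ∀ m, N < m → c m = 0 := by
    intro m hm
    exact Polynomial.coeff_eq_zero_of_natDegree_lt (lt_of_le_of_lt hQ'deg hm)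
  set A : ℕ → ℝ := fun m => ∫ ω in (0:ℝ)..(2*π), eval ![Real.cos ω, Real.sin ω] (c m)
    with hA
  have hrecA : ∀ m, m + 2 ≤ N →
      ((N - m : ℕ) : ℝ)^2 * A m = -(((m:ℝ)+1) * ((m:ℝ)+2)) * A (m + 2) := by
    intro m hm
    have hlap := integral_lap (c m) (hchom m (by omega))
    rw [coeff_recurrence hQharm m] at hlap
    have hpt : ∀ ω : ℝ, eval ![Real.cos ω, Real.sin ω]
        (C (-(((m : ℝ) + 1) * ((m : ℝ) + 2))) * (finSuccEquiv ℝ 2 Q).coeff (m + 2))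
        = -(((m:ℝ)+1) * ((m:ℝ)+2)) * eval ![Real.cos ω, Real.sin ω] (c (m+2)) := by
      intro ω; rw [map_mul, eval_C]
    rw [intervalIntegral.integral_congr (fun ω _ => hpt ω)] at hlap
    rw [intervalIntegral.integral_const_mul] at hlap
    rw [hA]
    linarith [hlap]
  -- the constant κ
  have hcN0 : (c N).IsHomogeneous 0 := by
    have := hchom N le_rfl
    simpa using this
  obtain ⟨κ, hκC⟩ : ∃ κ : ℝ, c N = C κ := by
    refine ⟨constantCoeff (c N), ?_⟩
    apply MvPolynomial.ext
    intro u
    by_cases hu : u = 0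
    · subst hu; simp [constantCoeff_eq]
    · rw [hcN0.coeff_eq_zero (by
        rw [Ne, Finsupp.degree_eq_zero_iff]; exact hu)]
      rw [coeff_C, if_neg (Ne.symm hu)]
  have hAN : A N = 2 * π * κ := by
    rw [hA]
    simp only [hκC, eval_C]
    rw [intervalIntegral.integral_const, smul_eq_mul, sub_zero]
  have hκval : evalP P ξ = κ := by
    have h1 : evalP P ξ = eval (Fin.cons 1 (fun _ => (0:ℝ))) Q := by
      rw [hQeval]
      have e0 : (Fin.cons (1:ℝ) (fun _ => (0:ℝ)) : Fin 3 → ℝ) 0 = 1 := rfl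
      have e1 : (Fin.cons (1:ℝ) (fun _ => (0:ℝ)) : Fin 3 → ℝ) 1 = 0 := rfl
      have e2 : (Fin.cons (1:ℝ) (fun _ => (0:ℝ)) : Fin 3 → ℝ) 2 = 0 := rfl
      rw [e0, e1, e2, one_smul, zero_smul, zero_smul, add_zero, add_zero]
    rw [h1, eval_eq_eval_mv_eval']
    have hdeg : ((finSuccEquiv ℝ 2 Q).map (eval (fun _ => (0:ℝ)))).natDegree < N + 1 := by
      have h := Polynomial.natDegree_map_le (f := eval (fun _ => (0:ℝ)))
        (p := finSuccEquiv ℝ 2 Q)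
      omega
    rw [Polynomial.eval_eq_sum_range' hdeg]
    simp only [Polynomial.coeff_map, one_pow, mul_one]
    rw [Finset.sum_eq_single N]
    · show eval (fun _ => (0:ℝ)) (c N) = κ
      rw [hκC, eval_C]
    · intro i hi hiN
      show eval (fun _ => (0:ℝ)) (c i) = 0
      have hilt : i < N := by
        have h := Finset.mem_range.mp hi
        omega
      rw [show (fun _ => (0:ℝ)) = (0 : Fin 2 → ℝ) from rfl, MvPolynomial.eval_zero,
        show (MvPolynomial.constantCoeff : MvPolynomial (Fin 2) ℝ → ℝ) = MvPolynomial.coeff 0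
          from MvPolynomial.constantCoeff_eq]
      apply (hchom i (le_of_lt hilt)).coeff_eq_zero
      simp only [map_zero]
      omega
    · intro h
      exact absurd (Finset.mem_range.mpr (by omega)) h
  -- funkAt as A 0
  have hfunk : funkAt (evalP P) e₁ e₂ = (1 / (2*π)) * A 0 := by
    rw [funkAt, hA]
    congr 1
    apply intervalIntegral.integral_congr
    intro ω _
    dsimp only
    have h1 : evalP P (Real.cos ω • e₁ + Real.sin ω • e₂)
        = eval (Fin.cons 0 ![Real.cos ω, Real.sin ω]) Q := by
      rw [hQeval]
      have e0 : (Fin.cons (0:ℝ) ![Real.cos ω, Real.sin ω] : Fin 3 → ℝ) 0 = 0 := rfl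
      have e1 : (Fin.cons (0:ℝ) ![Real.cos ω, Real.sin ω] : Fin 3 → ℝ) 1 = Real.cos ω := rfl
      have e2 : (Fin.cons (0:ℝ) ![Real.cos ω, Real.sin ω] : Fin 3 → ℝ) 2 = Real.sin ω := rfl
      rw [e0, e1, e2, zero_smul, zero_add]
    rw [h1, eval_eq_eval_mv_eval']
    rw [← Polynomial.coeff_zero_eq_eval_zero, Polynomial.coeff_map]
  rcases Nat.even_or_odd N with ⟨K, hK⟩ | hodd
  · -- even case
    have hKN : N = 2 * K := by omega
    have claim : ∀ t, t ≤ K →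
        ((N - 2*t).factorial : ℝ) * 4^t * ((t.factorial : ℝ))^2 * A (N - 2*t)
        = (-1 : ℝ)^t * (N.factorial : ℝ) * (2*π*κ) := by
      intro t
      induction t with
      | zero =>
        intro _
        simp only [Nat.mul_zero, Nat.sub_zero, pow_zero, Nat.factorial_zero, Nat.cast_one]
        rw [hAN]; ring
      | succ t ih =>
        intro ht
        have ht' : t ≤ K := by omega
        set a := N - 2*(t+1) with ha
        have ha2 : N - 2*t = a + 2 := by omega
        have hm2 : a + 2 ≤ N := by omega
        have heq := hrecA a hm2
        have hNa : ((N - a : ℕ) : ℝ) = 2*(t:ℝ) + 2 := by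
          rw [show N - a = 2*t + 2 from by omega]
          push_cast; ring
        have hac : ((a : ℝ) + 1) = ((a+1 : ℕ) : ℝ) := by push_cast; ring
        rw [hNa] at heq
        have ihv := ih ht'
        rw [ha2] at ihv
        -- expand factorials
        have hfac2 : ((a+2).factorial : ℝ) = ((a:ℝ)+2) * (((a:ℝ)+1) * (a.factorial : ℝ)) := by
          rw [Nat.factorial_succ, Nat.factorial_succ]; push_cast; ring
        have hfact : (((t+1)).factorial : ℝ) = ((t:ℝ)+1) * (t.factorial : ℝ) := by
          rw [Nat.factorial_succ]; push_cast; ring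
        rw [hfac2] at ihv
        rw [hfact]
        linear_combination ((a.factorial : ℝ) * 4^t * ((t.factorial : ℝ))^2) * heq - ihv
    have hA0 : 4^K * ((K.factorial : ℝ))^2 * A 0 = (-1 : ℝ)^K * (N.factorial : ℝ) * (2*π*κ) := by
      have := claim K le_rfl
      rw [show N - 2*K = 0 from by omega] at this
      simpa using this
    have hπ : (π : ℝ) ≠ 0 := Real.pi_ne_zero
    have hKfac : ((K.factorial : ℝ)) ≠ 0 := Nat.cast_ne_zero.mpr (Nat.factorial_ne_zero K)
    have h4K : (4:ℝ)^K ≠ 0 := pow_ne_zero _ (by norm_num)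
    have hleg : legendreP N 0 = (-1 : ℝ)^K * (N.factorial : ℝ) / (4^K * ((K.factorial : ℝ))^2) := by
      rw [legendreP_zero]
      rw [if_pos (by omega : N % 2 = 0)]
      have hdiv : N / 2 = K := by omega
      rw [hdiv]
      have hchoose : ((N.choose K : ℕ) : ℝ) * (K.factorial : ℝ) * (K.factorial : ℝ)
          = (N.factorial : ℝ) := by
        have := Nat.choose_mul_factorial_mul_factorial (show K ≤ N by omega)
        rw [show N - K = K from by omega] at this
        exact_mod_cast congrArg (Nat.cast : ℕ → ℝ) this
      have h2N : (2:ℝ)^N = 4^K := by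
        rw [hKN, pow_mul]; norm_num
      rw [h2N]
      have hden : (4:ℝ)^K * ((K.factorial : ℝ))^2 ≠ 0 :=
        mul_ne_zero h4K (pow_ne_zero _ hKfac)
      rw [div_eq_div_iff h4K hden]
      linear_combination ((-1:ℝ)^K * (4:ℝ)^K) * hchoose
    have hden : (4:ℝ)^K * ((K.factorial : ℝ))^2 ≠ 0 :=
      mul_ne_zero h4K (pow_ne_zero _ hKfac)
    have hA0v : A 0 = ((-1 : ℝ)^K * (N.factorial : ℝ) * (2*π*κ)) / (4^K * ((K.factorial : ℝ))^2) := by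
      rw [eq_div_iff hden]
      linear_combination hA0
    rw [hfunk, hleg, hκval, hA0v]
    field_simp
  · -- odd case
    have hA0 : A 0 = 0 := by
      rw [hA]
      exact integral_odd (c 0) (by simpa using hchom 0 (by omega)) hodd
    have hleg : legendreP N 0 = 0 := by
      rw [legendreP_zero,
        if_neg (by have := Nat.odd_iff.mp hodd; omega : ¬ N % 2 = 0)]
    rw [hfunk, hA0, hleg]
    ring
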